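/- With the setup of the association probabilities, the conditional CCDF of the horizontal distance X_g to the serving BS given association with a BS is P(X_g > x | s = g) = (1/A_g)·∫_x^∞ 2πλ_g r e^{−πλ_g r²}·(∫_{E_{g_l}(r)}^{w_p} f_W(w)κ_l(w)dw + ∫_{E_{g_n}(r)}^{w_p} f_W(w)(1−κ_l(w))dw)^{N} dr, and hence the conditional density is f_{X_g}(x) = (1/A_g)·2πλ_g x e^{−πλ_g x²}·(∫_{E_{g_l}(x)}^{w_p} f_W(w)κ_l(w)dw + ∫_{E_{g_n}(x)}^{w_p} f_W(w)(1−κ_l(w))dw)^{N}. -/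

import Mathlib

open MeasureTheory ProbabilityTheory Real

section helpers
open Set Filter

private lemma int_Ioi_eq_Icc' {z : ℝ → ℝ} {wp : ℝ}
    (hz : Integrable z)
    (hzsupp : ∀ w, wp < w → z w = 0) (a : ℝ) :
    ∫ w in Set.Ioi a, z w = ∫ w in Set.Icc a wp, z w := by
  rw [MeasureTheory.integral_Icc_eq_integral_Ioc]
  rcases le_or_gt a wp with h | h
  · rw [← Set.Ioc_union_Ioi_eq_Ioi h,
      setIntegral_union (Set.Ioc_disjoint_Ioi le_rfl) measurableSet_Ioi
        hz.integrableOn hz.integrableOn]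
    have h0 : ∫ w in Set.Ioi wp, z w = 0 := by
      rw [setIntegral_congr_fun measurableSet_Ioi (fun w hw => hzsupp w hw)]
      simp
    rw [h0, add_zero]
  · have h1 : ∫ w in Set.Ioi a, z w = 0 := by
      rw [setIntegral_congr_fun measurableSet_Ioi
        (fun w hw => hzsupp w (h.trans hw))]
      simp
    rw [h1, Set.Ioc_eq_empty (by exact fun hh => absurd h (not_lt.mpr hh.le))]
    simp

end helpers

section auxlaw
open Set Filter ENNReal

private lemma exp_integral_aux {c : ℝ} (hc : 0 < c) (x : ℝ) (hx : 0 ≤ x) :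
    (∫ r in Set.Ioi x, 2 * c * r * Real.exp (-(c * r ^ 2))) = Real.exp (-(c * x ^ 2)) ∧
    IntegrableOn (fun r => 2 * c * r * Real.exp (-(c * r ^ 2))) (Set.Ioi x) := by
  have hderiv : ∀ r ∈ Ici x, HasDerivAt (fun r => -Real.exp (-(c * r ^ 2)))
      (2 * c * r * Real.exp (-(c * r ^ 2))) r := by
    intro r _
    have h1 : HasDerivAt (fun r : ℝ => -(c * r ^ 2)) (-(c * (2 * r))) r := by
      have h := ((hasDerivAt_pow 2 r).const_mul c).fun_neg
      simpa using h
    have h2 := (h1.exp).fun_neg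
    exact h2.congr_deriv (by ring)
  have hpos : ∀ r ∈ Ioi x, 0 ≤ 2 * c * r * Real.exp (-(c * r ^ 2)) := by
    intro r hr
    have h0 : (0:ℝ) ≤ r := le_trans hx (le_of_lt hr)
    positivity
  have htend : Tendsto (fun r => -Real.exp (-(c * r ^ 2))) atTop (nhds 0) := by
    have h3 : Tendsto (fun r : ℝ => -(c * r ^ 2)) atTop atBot := by
      have h4 : Tendsto (fun r : ℝ => c * r ^ 2) atTop atTop :=
        (tendsto_pow_atTop (n := 2) (by norm_num)).const_mul_atTop hc
      exact tendsto_neg_atTop_atBot.comp h4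
    have h5 := Real.tendsto_exp_atBot.comp h3
    simpa using h5.neg
  constructor
  · have h := integral_Ioi_of_hasDerivAt_of_nonneg' hderiv hpos htend
    simpa using h
  · exact integrableOn_Ioi_deriv_of_nonneg' hderiv hpos htend

private lemma map_eq_withDensity {α : Type*} [MeasurableSpace α] (μ : Measure α)
    [IsProbabilityMeasure μ] {lamg : ℝ} (hlamg : 0 < lamg)
    {R : α → ℝ} (hRmeas : Measurable R) (hRnonneg : ∀ ω, 0 ≤ R ω)
    (hvoid : ∀ r : ℝ, 0 ≤ r →
      μ {ω | R ω > r} = ENNReal.ofReal (Real.exp (-(π * lamg * r ^ 2)))) :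
    μ.map R = volume.withDensity
      (fun r => ENNReal.ofReal
        (if 0 ≤ r then 2 * π * lamg * r * Real.exp (-(π * lamg * r ^ 2)) else 0)) := by
  set dens : ℝ → ℝ := fun r => 2 * π * lamg * r * Real.exp (-(π * lamg * r ^ 2)) with hdens
  set ρ : ℝ → ℝ≥0∞ := fun r => ENNReal.ofReal (if 0 ≤ r then dens r else 0) with hρ
  have hc : 0 < π * lamg := mul_pos Real.pi_pos hlamg
  have hdensEq : dens = fun r => 2 * (π * lamg) * r * Real.exp (-((π * lamg) * r ^ 2)) := by
    funext r; simp only [hdens]; ring_nf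
  have hdmeas : Measurable dens := by fun_prop
  have hρmeas : Measurable ρ := by
    apply Measurable.ennreal_ofReal
    exact Measurable.ite measurableSet_Ici hdmeas measurable_const
  have hwd : ∀ x : ℝ, 0 ≤ x → volume.withDensity ρ (Ioi x)
      = ENNReal.ofReal (Real.exp (-(π * lamg * x ^ 2))) := by
    intro x hx
    rw [withDensity_apply _ measurableSet_Ioi]
    have h1 : ∫⁻ r in Ioi x, ρ r = ∫⁻ r in Ioi x, ENNReal.ofReal (dens r) := by
      apply setLIntegral_congr_fun measurableSet_Ioi
      exact fun r hr => by
        simp only [hρ, if_pos (hx.trans (le_of_lt hr))]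
    have hint : IntegrableOn dens (Ioi x) := by
      rw [hdensEq]; exact (exp_integral_aux hc x hx).2
    have hnn : 0 ≤ᵐ[volume.restrict (Ioi x)] dens := by
      refine (ae_restrict_mem measurableSet_Ioi).mono fun r hr => ?_
      have h0 : (0:ℝ) ≤ r := hx.trans (le_of_lt hr)
      simp only [hdens, Pi.zero_apply]
      positivity
    rw [h1, ← ofReal_integral_eq_lintegral_ofReal hint hnn]
    congr 1
    rw [hdensEq]
    exact (exp_integral_aux hc x hx).1
  have hρ0 : ∀ r : ℝ, r ≤ 0 → ρ r = 0 := by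
    intro r hr
    by_cases h : 0 ≤ r
    · have h0 : r = 0 := le_antisymm hr h
      simp [hρ, hdens, h0]
    · simp [hρ, h]
  have huniv : volume.withDensity ρ univ = 1 := by
    rw [withDensity_apply _ MeasurableSet.univ, Measure.restrict_univ,
      ← lintegral_add_compl ρ (measurableSet_Iic (a := (0:ℝ)))]
    have h2 : ∫⁻ r in Iic (0:ℝ), ρ r = 0 := by
      rw [setLIntegral_congr_fun measurableSet_Iic
        (fun r hr => hρ0 r hr)]
      simp
    have h3 := hwd 0 le_rfl
    rw [withDensity_apply _ measurableSet_Ioi] at h3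
    rw [h2, zero_add, compl_Iic, h3]
    simp
  have hwdneg : ∀ x : ℝ, x < 0 → volume.withDensity ρ (Ioi x) = 1 := by
    intro x hx
    rw [withDensity_apply _ measurableSet_Ioi,
      ← Set.Ioc_union_Ioi_eq_Ioi hx.le,
      lintegral_union measurableSet_Ioi (Set.Ioc_disjoint_Ioi le_rfl)]
    have h2 : ∫⁻ r in Ioc x 0, ρ r = 0 := by
      rw [setLIntegral_congr_fun measurableSet_Ioc
        (fun r hr => hρ0 r hr.2)]
      simp
    have h3 := hwd 0 le_rfl
    rw [withDensity_apply _ measurableSet_Ioi] at h3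
    rw [h2, zero_add, h3]
    simp
  haveI hmR : IsProbabilityMeasure (μ.map R) := Measure.isProbabilityMeasure_map hRmeas.aemeasurable
  haveI hwfin : IsFiniteMeasure (volume.withDensity ρ) :=
    ⟨by rw [huniv]; exact one_lt_top⟩
  refine ext_of_generate_finite (Set.range Set.Ioi)
    ((BorelSpace.measurable_eq).trans (borel_eq_generateFrom_Ioi ℝ)) isPiSystem_Ioi ?_ ?_
  · rintro s ⟨x, rfl⟩
    rw [Measure.map_apply hRmeas measurableSet_Ioi]
    rcases le_or_gt 0 x with hx | hx
    · rw [hwd x hx, ← hvoid x hx]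
      rfl
    · rw [hwdneg x hx]
      have h4 : R ⁻¹' Ioi x = univ :=
        eq_univ_of_forall fun ω => lt_of_lt_of_le hx (hRnonneg ω)
      rw [h4, measure_univ]
  · rw [huniv, measure_univ]

end auxlaw


set_option maxHeartbeats 1000000 in
/-- conditional serving-BS distance distribution, Lemma 3:
with the setup of the association probabilities (nearest-BS horizontal distance `R`
with CCDF `exp(−πλ_g r²)`, hence density `2πλ_g r e^{−πλ_g r²}`, and `N` i.i.d. UAVs
with distance density `f_W` on `[h_u, w_p]` and LOS probability `κ_l`), given the
BS-association event
`S_g = {every LOS UAV is farther than E_{g_l}(R), every NLOS UAV farther than E_{g_n}(R)}`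
of probability `A_g`, the conditional CCDF of `R` is
`P(R > x | s = g) = (1/A_g) ∫_x^∞ 2πλ_g r e^{−πλ_g r²}
  (∫_{E_{g_l}(r)}^{w_p} f_W κ_l + ∫_{E_{g_n}(r)}^{w_p} f_W (1−κ_l))^N dr`
and hence the conditional density is
`f_{X_g}(x) = (1/A_g) 2πλ_g x e^{−πλ_g x²}
  (∫_{E_{g_l}(x)}^{w_p} f_W κ_l + ∫_{E_{g_n}(x)}^{w_p} f_W (1−κ_l))^N`. -/
theorem serving_bs_conditional_distance
    {α : Type*} [MeasurableSpace α] (μ : Measure α) [IsProbabilityMeasure μ]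
    (N : ℕ) (hN : 0 < N) (hu wp lamg : ℝ) (hhu : 0 < hu) (hwp : hu < wp)
    (hlamg : 0 < lamg)
    (fW : ℝ → ℝ) (hfWmeas : Measurable fW) (hfWnonneg : ∀ w, 0 ≤ fW w)
    (hfWsupp : ∀ w, w < hu ∨ wp < w → fW w = 0)
    (hfWint : ∫ w, fW w = 1)
    (κ : ℝ → ℝ) (hκmeas : Measurable κ) (hκ0 : ∀ w, 0 ≤ κ w) (hκ1 : ∀ w, κ w ≤ 1)
    (Egl Egn : ℝ → ℝ) (hEgl : Measurable Egl) (hEgn : Measurable Egn)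
    (W : Fin N → α → ℝ) (L : Fin N → α → Bool)
    (hWLmeas : ∀ i, Measurable (fun ω => (W i ω, L i ω)))
    (hlaw : ∀ i, ∀ s : Set ℝ, MeasurableSet s →
      μ {ω | W i ω ∈ s ∧ L i ω = true} = ENNReal.ofReal (∫ w in s, fW w * κ w)
      ∧ μ {ω | W i ω ∈ s ∧ L i ω = false}
          = ENNReal.ofReal (∫ w in s, fW w * (1 - κ w)))
    (hiid : iIndepFun (fun i ω => (W i ω, L i ω)) μ)
    (R : α → ℝ) (hRmeas : Measurable R) (hRnonneg : ∀ ω, 0 ≤ R ω)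
    (hRindep : IndepFun R (fun ω => fun i => (W i ω, L i ω)) μ)
    (hvoid : ∀ r : ℝ, 0 ≤ r →
      μ {ω | R ω > r} = ENNReal.ofReal (Real.exp (-(π * lamg * r ^ 2))))
    (Sg : Set α)
    (hSg : Sg = {ω | ∀ i, (L i ω = true → W i ω > Egl (R ω))
                        ∧ (L i ω = false → W i ω > Egn (R ω))})
    (Ag : ℝ) (hAgpos : 0 < Ag) (hAg : ENNReal.ofReal Ag = μ Sg) :
    (∀ x : ℝ, 0 ≤ x →
      (μ[|Sg]) {ω | R ω > x}
        = ENNReal.ofReal ((1 / Ag) *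
            ∫ r in Set.Ioi x,
              2 * π * lamg * r * Real.exp (-(π * lamg * r ^ 2))
                * ((∫ w in Set.Icc (Egl r) wp, fW w * κ w)
                    + ∫ w in Set.Icc (Egn r) wp, fW w * (1 - κ w)) ^ N))
    ∧ (μ[|Sg]).map R = volume.withDensity (fun x => ENNReal.ofReal
        (if 0 ≤ x then
          (1 / Ag) * (2 * π * lamg * x * Real.exp (-(π * lamg * x ^ 2)))
            * ((∫ w in Set.Icc (Egl x) wp, fW w * κ w)
                + ∫ w in Set.Icc (Egn x) wp, fW w * (1 - κ w)) ^ N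
         else 0)) := by
  classical
  subst hSg
  have hc : 0 < π * lamg := mul_pos Real.pi_pos hlamg
  -- density of R
  have hdmeas : Measurable (fun r : ℝ => 2 * π * lamg * r * Real.exp (-(π * lamg * r ^ 2))) := by
    fun_prop
  have hdensEq : (fun r : ℝ => 2 * π * lamg * r * Real.exp (-(π * lamg * r ^ 2)))
      = fun r => 2 * (π * lamg) * r * Real.exp (-((π * lamg) * r ^ 2)) := by
    funext r; ring_nf
  have hρmeas : Measurable (fun r : ℝ => ENNReal.ofReal
      (if 0 ≤ r then 2 * π * lamg * r * Real.exp (-(π * lamg * r ^ 2)) else 0)) :=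
    (Measurable.ite measurableSet_Ici hdmeas measurable_const).ennreal_ofReal
  have hmapR : μ.map R = volume.withDensity (fun r => ENNReal.ofReal
      (if 0 ≤ r then 2 * π * lamg * r * Real.exp (-(π * lamg * r ^ 2)) else 0)) :=
    map_eq_withDensity μ hlamg hRmeas hRnonneg hvoid
  -- integrability of fW and the two sub-densities
  have hfWInt : Integrable fW := by
    by_contra h
    rw [MeasureTheory.integral_undef h] at hfWint
    exact one_ne_zero hfWint.symm
  have hz1m : Measurable (fun w => fW w * κ w) := hfWmeas.mul hκmeas
  have hz2m : Measurable (fun w => fW w * (1 - κ w)) :=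
    hfWmeas.mul (measurable_const.sub hκmeas)
  have hz1nn : ∀ w, 0 ≤ fW w * κ w := fun w => mul_nonneg (hfWnonneg w) (hκ0 w)
  have hz2nn : ∀ w, 0 ≤ fW w * (1 - κ w) := fun w =>
    mul_nonneg (hfWnonneg w) (sub_nonneg.mpr (hκ1 w))
  have hz1int : Integrable (fun w => fW w * κ w) := by
    refine hfWInt.mono hz1m.aestronglyMeasurable (ae_of_all _ fun w => ?_)
    rw [Real.norm_eq_abs, Real.norm_eq_abs, abs_of_nonneg (hz1nn w),
      abs_of_nonneg (hfWnonneg w)]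
    simpa using mul_le_mul_of_nonneg_left (hκ1 w) (hfWnonneg w)
  have hz2int : Integrable (fun w => fW w * (1 - κ w)) := by
    refine hfWInt.mono hz2m.aestronglyMeasurable (ae_of_all _ fun w => ?_)
    rw [Real.norm_eq_abs, Real.norm_eq_abs, abs_of_nonneg (hz2nn w),
      abs_of_nonneg (hfWnonneg w)]
    have h2 : 1 - κ w ≤ 1 := by linarith [hκ0 w]
    simpa using mul_le_mul_of_nonneg_left h2 (hfWnonneg w)
  have hIoi1 : ∀ a : ℝ, (∫ w in Set.Ioi a, fW w * κ w)
      = ∫ w in Set.Icc a wp, fW w * κ w := fun a =>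
    int_Ioi_eq_Icc' hz1int (fun w hw => by rw [hfWsupp w (Or.inr hw), zero_mul]) a
  have hIoi2 : ∀ a : ℝ, (∫ w in Set.Ioi a, fW w * (1 - κ w))
      = ∫ w in Set.Icc a wp, fW w * (1 - κ w) := fun a =>
    int_Ioi_eq_Icc' hz2int (fun w hw => by rw [hfWsupp w (Or.inr hw), zero_mul]) a
  -- the success-probability function G
  set G : ℝ → ℝ := fun r => (∫ w in Set.Icc (Egl r) wp, fW w * κ w)
      + ∫ w in Set.Icc (Egn r) wp, fW w * (1 - κ w) with hG
  have hGnn : ∀ r, 0 ≤ G r := fun r =>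
    add_nonneg (setIntegral_nonneg measurableSet_Icc fun w _ => hz1nn w)
      (setIntegral_nonneg measurableSet_Icc fun w _ => hz2nn w)
  have hsum : (∫ w, fW w * κ w) + (∫ w, fW w * (1 - κ w)) = 1 := by
    rw [← integral_add hz1int hz2int]
    have heq : (fun w => fW w * κ w + fW w * (1 - κ w)) = fW := by funext w; ring
    rw [heq, hfWint]
  have hGle : ∀ r, G r ≤ 1 := by
    intro r
    have h1 : (∫ w in Set.Icc (Egl r) wp, fW w * κ w) ≤ ∫ w, fW w * κ w :=
      setIntegral_le_integral hz1int (ae_of_all _ hz1nn)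
    have h2 : (∫ w in Set.Icc (Egn r) wp, fW w * (1 - κ w)) ≤ ∫ w, fW w * (1 - κ w) :=
      setIntegral_le_integral hz2int (ae_of_all _ hz2nn)
    rw [hG]
    dsimp only
    linarith
  have hanti1 : Antitone (fun a => ∫ w in Set.Icc a wp, fW w * κ w) := by
    intro a b hab
    beta_reduce
    rw [← hIoi1 a, ← hIoi1 b]
    exact setIntegral_mono_set hz1int.integrableOn (ae_of_all _ hz1nn)
      (HasSubset.Subset.eventuallyLE (Set.Ioi_subset_Ioi hab))
  have hanti2 : Antitone (fun a => ∫ w in Set.Icc a wp, fW w * (1 - κ w)) := by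
    intro a b hab
    beta_reduce
    rw [← hIoi2 a, ← hIoi2 b]
    exact setIntegral_mono_set hz2int.integrableOn (ae_of_all _ hz2nn)
      (HasSubset.Subset.eventuallyLE (Set.Ioi_subset_Ioi hab))
  have hGmeas : Measurable G :=
    (hanti1.measurable.comp hEgl).add (hanti2.measurable.comp hEgn)
  have hGNmeas : Measurable (fun r => ENNReal.ofReal (G r ^ N)) :=
    (hGmeas.pow_const N).ennreal_ofReal
  -- the UAV tuple map
  set WL : α → (Fin N → ℝ × Bool) := fun ω i => (W i ω, L i ω) with hWLdef
  have hWLm : Measurable WL := measurable_pi_lambda _ hWLmeas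
  haveI : IsProbabilityMeasure (μ.map WL) := Measure.isProbabilityMeasure_map hWLm.aemeasurable
  have hpairs : μ.map (fun ω => (R ω, WL ω)) = (μ.map R).prod (μ.map WL) :=
    (ProbabilityTheory.indepFun_iff_map_prod_eq_prod_map_map hRmeas.aemeasurable
      hWLm.aemeasurable).mp hRindep
  -- per-UAV target set
  set B : ℝ → Set (ℝ × Bool) := fun r =>
    (Set.Ioi (Egl r) ×ˢ {true}) ∪ (Set.Ioi (Egn r) ×ˢ {false}) with hB
  have hBmeas : ∀ r, MeasurableSet (B r) := fun r =>
    (measurableSet_Ioi.prod (measurableSet_singleton _)).union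
      (measurableSet_Ioi.prod (measurableSet_singleton _))
  -- joint constraint set
  set C : Set (ℝ × (Fin N → ℝ × Bool)) := {p | ∀ i, p.2 i ∈ B p.1} with hC
  have hCmeas : MeasurableSet C := by
    have hCeq : C = ⋂ i, (fun p : ℝ × (Fin N → ℝ × Bool) => (p.1, p.2 i)) ⁻¹'
        {q : ℝ × (ℝ × Bool) | (Egl q.1 < q.2.1 ∧ q.2.2 = true)
          ∨ (Egn q.1 < q.2.1 ∧ q.2.2 = false)} := by
      ext p
      simp only [hC, Set.mem_setOf_eq, Set.mem_iInter, Set.mem_preimage, hB, Set.mem_union,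
        Set.mem_prod, Set.mem_Ioi, Set.mem_singleton_iff]
    rw [hCeq]
    refine MeasurableSet.iInter fun i => ?_
    have hm : Measurable (fun p : ℝ × (Fin N → ℝ × Bool) => (p.1, p.2 i)) :=
      measurable_fst.prodMk ((measurable_pi_apply i).comp measurable_snd)
    refine hm ?_
    refine MeasurableSet.union ?_ ?_
    · exact (measurableSet_lt (hEgl.comp measurable_fst)
        (measurable_fst.comp measurable_snd)).inter
        ((measurable_snd.comp measurable_snd) (measurableSet_singleton true))
    · exact (measurableSet_lt (hEgn.comp measurable_fst)
        (measurable_fst.comp measurable_snd)).inter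
        ((measurable_snd.comp measurable_snd) (measurableSet_singleton false))
  -- the association event as a preimage
  have hSgInter : ∀ T : Set ℝ,
      {ω | ∀ i, (L i ω = true → W i ω > Egl (R ω))
            ∧ (L i ω = false → W i ω > Egn (R ω))} ∩ R ⁻¹' T
        = (fun ω => (R ω, WL ω)) ⁻¹' ((T ×ˢ Set.univ) ∩ C) := by
    intro T
    ext ω
    simp only [Set.mem_inter_iff, Set.mem_setOf_eq, Set.mem_preimage, Set.mem_prod,
      Set.mem_univ, and_true, hC, hB, hWLdef, Set.mem_union, Set.mem_Ioi,
      Set.mem_singleton_iff]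
    constructor
    · rintro ⟨hall, hT⟩
      refine ⟨hT, fun i => ?_⟩
      rcases hall i with ⟨h1, h2⟩
      cases hLi : L i ω
      · exact Or.inr ⟨h2 hLi, rfl⟩
      · exact Or.inl ⟨h1 hLi, rfl⟩
    · rintro ⟨hT, hall⟩
      refine ⟨fun i => ?_, hT⟩
      rcases hall i with ⟨hgt, hLi⟩ | ⟨hgt, hLi⟩
      · exact ⟨fun _ => hgt, fun h => by rw [hLi] at h; exact Bool.noConfusion h⟩
      · exact ⟨fun h => by rw [hLi] at h; exact Bool.noConfusion h, fun _ => hgt⟩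
  have hSgmeas : MeasurableSet {ω | ∀ i, (L i ω = true → W i ω > Egl (R ω))
      ∧ (L i ω = false → W i ω > Egn (R ω))} := by
    have h := hSgInter Set.univ
    rw [Set.preimage_univ, Set.inter_univ] at h
    rw [h]
    exact (hRmeas.prodMk hWLm) ((MeasurableSet.univ.prod MeasurableSet.univ).inter hCmeas)
  -- single-UAV probability
  have hq : ∀ r : ℝ, ∀ i : Fin N,
      μ ((fun ω => (W i ω, L i ω)) ⁻¹' (B r)) = ENNReal.ofReal (G r) := by
    intro r i
    have hsplit : (fun ω => (W i ω, L i ω)) ⁻¹' (B r)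
        = {ω | W i ω ∈ Set.Ioi (Egl r) ∧ L i ω = true}
          ∪ {ω | W i ω ∈ Set.Ioi (Egn r) ∧ L i ω = false} := by
      ext ω
      simp only [hB, Set.mem_preimage, Set.mem_union, Set.mem_prod, Set.mem_Ioi,
        Set.mem_singleton_iff, Set.mem_setOf_eq]
    have hd : Disjoint {ω | W i ω ∈ Set.Ioi (Egl r) ∧ L i ω = true}
        {ω | W i ω ∈ Set.Ioi (Egn r) ∧ L i ω = false} := by
      rw [Set.disjoint_left]
      rintro ω ⟨_, h1⟩ ⟨_, h2⟩
      rw [h1] at h2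
      exact Bool.noConfusion h2
    have hm2 : MeasurableSet {ω | W i ω ∈ Set.Ioi (Egn r) ∧ L i ω = false} := by
      have heq : {ω | W i ω ∈ Set.Ioi (Egn r) ∧ L i ω = false}
          = (fun ω => (W i ω, L i ω)) ⁻¹' ((Set.Ioi (Egn r)) ×ˢ {false}) := by
        ext ω
        simp only [Set.mem_preimage, Set.mem_prod, Set.mem_Ioi, Set.mem_singleton_iff,
          Set.mem_setOf_eq]
      rw [heq]
      exact (hWLmeas i) (measurableSet_Ioi.prod (measurableSet_singleton _))
    rw [hsplit, measure_union hd hm2,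
      (hlaw i _ measurableSet_Ioi).1, (hlaw i _ measurableSet_Ioi).2,
      hIoi1, hIoi2,
      ← ENNReal.ofReal_add (setIntegral_nonneg measurableSet_Icc fun w _ => hz1nn w)
        (setIntegral_nonneg measurableSet_Icc fun w _ => hz2nn w)]
  -- probability that all UAVs satisfy the constraint at distance r
  have hinner : ∀ r : ℝ,
      (μ.map WL) {v : Fin N → ℝ × Bool | ∀ i, v i ∈ B r} = ENNReal.ofReal (G r ^ N) := by
    intro r
    have hmset : MeasurableSet {v : Fin N → ℝ × Bool | ∀ i, v i ∈ B r} := by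
      have heq : {v : Fin N → ℝ × Bool | ∀ i, v i ∈ B r}
          = Set.pi Set.univ (fun _ => B r) := by
        ext v
        simp [Set.mem_univ_pi]
      rw [heq]
      exact MeasurableSet.univ_pi fun i => hBmeas r
    rw [Measure.map_apply hWLm hmset]
    have hpreq : WL ⁻¹' {v : Fin N → ℝ × Bool | ∀ i, v i ∈ B r}
        = ⋂ i ∈ Finset.univ, (fun ω => (W i ω, L i ω)) ⁻¹' (B r) := by
      ext ω
      simp [hWLdef]
    rw [hpreq]
    have hprod := hiid.measure_inter_preimage_eq_mul (S := Finset.univ)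
      (sets := fun _ => B r) (fun i _ => hBmeas r)
    beta_reduce at hprod
    rw [hprod]
    have : ∀ i ∈ Finset.univ, μ ((fun ω => (W i ω, L i ω)) ⁻¹' (B r))
        = ENNReal.ofReal (G r) := fun i _ => hq r i
    rw [Finset.prod_congr rfl this, Finset.prod_const]
    simp [ENNReal.ofReal_pow (hGnn r)]
  -- the core identity
  have core : ∀ T : Set ℝ, MeasurableSet T →
      μ ({ω | ∀ i, (L i ω = true → W i ω > Egl (R ω))
            ∧ (L i ω = false → W i ω > Egn (R ω))} ∩ R ⁻¹' T)
        = ∫⁻ r in T, (ENNReal.ofReal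
              (if 0 ≤ r then 2 * π * lamg * r * Real.exp (-(π * lamg * r ^ 2)) else 0))
            * ENNReal.ofReal (G r ^ N) := by
    intro T hT
    have hTm : MeasurableSet ((T ×ˢ Set.univ) ∩ C) :=
      (hT.prod MeasurableSet.univ).inter hCmeas
    rw [hSgInter T, ← Measure.map_apply (hRmeas.prodMk hWLm) hTm, hpairs,
      Measure.prod_apply hTm]
    have hpre : ∀ r : ℝ, Prod.mk r ⁻¹' ((T ×ˢ Set.univ) ∩ C)
        = if r ∈ T then {v : Fin N → ℝ × Bool | ∀ i, v i ∈ B r} else ∅ := by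
      intro r
      ext v
      by_cases h : r ∈ T <;>
        simp only [hC, Set.mem_preimage, Set.mem_inter_iff, Set.mem_prod, Set.mem_univ,
          and_true, Set.mem_setOf_eq, if_pos, if_neg, h, Set.mem_empty_iff_false,
          true_and, false_and, not_false_eq_true] <;> tauto
    have hfun : (fun r => (μ.map WL) (Prod.mk r ⁻¹' ((T ×ˢ Set.univ) ∩ C)))
        = T.indicator (fun r => ENNReal.ofReal (G r ^ N)) := by
      funext r
      rw [hpre r]
      by_cases h : r ∈ T
      · rw [if_pos h, Set.indicator_of_mem h, hinner r]
      · rw [if_neg h, Set.indicator_of_notMem h]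
        simp
    rw [hfun, lintegral_indicator hT, hmapR,
      setLIntegral_withDensity_eq_setLIntegral_mul volume hρmeas hGNmeas hT]
    rfl
  constructor
  · -- Part 1: conditional CCDF
    intro x hx
    have hRset : {ω | R ω > x} = R ⁻¹' (Set.Ioi x) := rfl
    rw [ProbabilityTheory.cond_apply hSgmeas, hRset, core _ measurableSet_Ioi]
    have hpt : ∀ r : ℝ, r ∈ Set.Ioi x →
        (ENNReal.ofReal
            (if 0 ≤ r then 2 * π * lamg * r * Real.exp (-(π * lamg * r ^ 2)) else 0))
          * ENNReal.ofReal (G r ^ N)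
        = ENNReal.ofReal
            (2 * π * lamg * r * Real.exp (-(π * lamg * r ^ 2)) * G r ^ N) := by
      intro r hr
      have h0 : (0:ℝ) ≤ r := hx.trans (le_of_lt hr)
      rw [if_pos h0, ← ENNReal.ofReal_mul (by positivity)]
    rw [setLIntegral_congr_fun measurableSet_Ioi hpt]
    have hdint : IntegrableOn (fun r : ℝ => 2 * π * lamg * r
        * Real.exp (-(π * lamg * r ^ 2))) (Set.Ioi x) := by
      rw [hdensEq]
      exact (exp_integral_aux hc x hx).2
    have hint : IntegrableOn (fun r : ℝ => 2 * π * lamg * r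
        * Real.exp (-(π * lamg * r ^ 2)) * G r ^ N) (Set.Ioi x) := by
      refine Integrable.mono hdint ((hdmeas.mul (hGmeas.pow_const N)).aestronglyMeasurable) ?_
      refine (ae_restrict_mem measurableSet_Ioi).mono fun r hr => ?_
      have h0 : (0:ℝ) ≤ r := hx.trans (le_of_lt hr)
      have hd0 : 0 ≤ 2 * π * lamg * r * Real.exp (-(π * lamg * r ^ 2)) := by positivity
      rw [Real.norm_eq_abs, Real.norm_eq_abs,
        abs_of_nonneg (mul_nonneg hd0 (pow_nonneg (hGnn r) N)), abs_of_nonneg hd0]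
      have hGN1 : G r ^ N ≤ 1 := pow_le_one₀ (hGnn r) (hGle r)
      calc 2 * π * lamg * r * Real.exp (-(π * lamg * r ^ 2)) * G r ^ N
          ≤ 2 * π * lamg * r * Real.exp (-(π * lamg * r ^ 2)) * 1 :=
            mul_le_mul_of_nonneg_left hGN1 hd0
        _ = 2 * π * lamg * r * Real.exp (-(π * lamg * r ^ 2)) := mul_one _
    have hnn : 0 ≤ᵐ[volume.restrict (Set.Ioi x)] fun r : ℝ =>
        2 * π * lamg * r * Real.exp (-(π * lamg * r ^ 2)) * G r ^ N := by
      refine (ae_restrict_mem measurableSet_Ioi).mono fun r hr => ?_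
      have h0 : (0:ℝ) ≤ r := hx.trans (le_of_lt hr)
      have hg := hGnn r
      simp only [Pi.zero_apply]
      positivity
    rw [← MeasureTheory.ofReal_integral_eq_lintegral_ofReal hint hnn, ← hAg,
      ENNReal.ofReal_mul (le_of_lt (by positivity : (0:ℝ) < 1 / Ag)),
      one_div, ENNReal.ofReal_inv_of_pos hAgpos]
  · -- Part 2: density of the conditional distribution
    refine Measure.ext fun s hs => ?_
    rw [Measure.map_apply hRmeas hs, ProbabilityTheory.cond_apply hSgmeas, core s hs,
      withDensity_apply _ hs, ← hAg,
      ← lintegral_const_mul _ (hρmeas.fun_mul hGNmeas)]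
    refine lintegral_congr fun r => ?_
    by_cases h : 0 ≤ r
    · rw [if_pos h, if_pos h, ← ENNReal.ofReal_inv_of_pos hAgpos,
        ← ENNReal.ofReal_mul (by positivity),
        ← ENNReal.ofReal_mul (by positivity)]
      congr 1
      ring
    · rw [if_neg h, if_neg h]
      simp
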